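/- Let K : ℝ → ℝ be integrable with ∫K = 1, ∫uK(u)du = 0, ∫u²|K(u)|du < ∞, and with support contained in [−A, A] for some A > 0. Let f : ℝ → ℝ be differentiable with f' Lipschitz, and let g be a measurable function with f'(y) − f'(x) = ∫_x^y g(t) dt for all x, y. Fix x ∈ ℝ, h > 0, and a constant M ≥ 0 such that |g(y)| ≤ M for Lebesgue-almost every y ∈ [x − A h, x + A h]. Then | ∫_ℝ K(u)·f(x − h u) du − f(x) | ≤ (h²/2)·M·∫_ℝ u²·|K(u)| du. -/

import Mathlib

open MeasureTheory intervalIntegral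

lemma abs_int_abs (c : ℝ) : |(∫ t in (0:ℝ)..c, |t|)| = c ^ 2 / 2 := by
  rcases le_or_gt 0 c with hc | hc
  · have : ∫ t in (0:ℝ)..c, |t| = ∫ t in (0:ℝ)..c, t := by
      apply intervalIntegral.integral_congr
      intro t ht
      rw [Set.uIcc_of_le hc] at ht
      exact abs_of_nonneg ht.1
    rw [this, integral_id, abs_of_nonneg (by nlinarith [sq_nonneg c])]
    ring
  · have : ∫ t in (0:ℝ)..c, |t| = ∫ t in (0:ℝ)..c, -t := by
      apply intervalIntegral.integral_congr
      intro t ht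
      rw [Set.uIcc_of_ge hc.le] at ht
      exact abs_of_nonpos ht.2
    rw [this, intervalIntegral.integral_neg, integral_id, abs_neg,
      abs_of_nonneg (by nlinarith [sq_nonneg c])]
    ring

/-- **Bias bound by local generalized curvature**: let `K` be an integrable kernel with
`∫ K = 1`, `∫ u K(u) du = 0`, `∫ u²|K(u)| du < ∞` and support contained in `[-A, A]`, let
`f` be differentiable with `f'` Lipschitz and weak-second-derivative representative `g`,
and suppose `|g(y)| ≤ M` for a.e. `y ∈ [x - A h, x + A h]`. Then
`|∫ K(u) f(x - h u) du - f x| ≤ (h²/2) M ∫ u² |K(u)| du`. -/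
theorem local_generalized_curvature_bias_bound
    (K f f' g : ℝ → ℝ) (L : NNReal) (A : ℝ) (hA : 0 < A)
    (hK_int : Integrable K)
    (hK_norm : ∫ u, K u = 1)
    (hK_mean : ∫ u, u * K u = 0)
    (hK_mom2 : Integrable (fun u => u ^ 2 * |K u|))
    (hK_supp : Function.support K ⊆ Set.Icc (-A) A)
    (hderiv : ∀ x : ℝ, HasDerivAt f (f' x) x)
    (hlip : LipschitzWith L f')
    (hg_meas : Measurable g)
    (hrep : ∀ x y : ℝ, f' y - f' x = ∫ t in x..y, g t)
    (x h M : ℝ) (hh : 0 < h) (hM : 0 ≤ M)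
    (hloc : ∀ᵐ y ∂volume, y ∈ Set.Icc (x - A * h) (x + A * h) → |g y| ≤ M) :
    |(∫ u, K u * f (x - h * u)) - f x|
      ≤ (h ^ 2 / 2) * M * ∫ u, u ^ 2 * |K u| := by
  have hAh : 0 < A * h := mul_pos hA hh
  have hxmem : x ∈ Set.Icc (x - A * h) (x + A * h) := by
    constructor <;> linarith
  have hcontf' : Continuous f' := hlip.continuous
  -- Taylor bound
  have key : ∀ y ∈ Set.Icc (x - A * h) (x + A * h),
      |f y - f x - f' x * (y - x)| ≤ M / 2 * (y - x) ^ 2 := by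
    intro y hy
    have hsub : Set.uIcc x y ⊆ Set.Icc (x - A * h) (x + A * h) :=
      Set.uIcc_subset_Icc hxmem hy
    -- step 1 : bound on f' increments
    have hf'bd : ∀ t ∈ Set.uIcc x y, |f' t - f' x| ≤ M * |t - x| := by
      intro t ht
      have hsub2 : Set.uIoc x t ⊆ Set.Icc (x - A * h) (x + A * h) :=
        Set.uIoc_subset_uIcc.trans
          ((Set.uIcc_subset_uIcc Set.left_mem_uIcc ht).trans hsub)
      rw [hrep x t, ← Real.norm_eq_abs]
      have hae : ∀ᵐ s ∂volume, s ∈ Set.uIoc x t → ‖g s‖ ≤ M := by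
        filter_upwards [hloc] with s hs hst
        rw [Real.norm_eq_abs]
        exact hs (hsub2 hst)
      exact intervalIntegral.norm_integral_le_of_norm_le_const_ae hae
    -- step 2 : FTC
    have hftc : f y - f x = ∫ t in x..y, f' t := by
      rw [intervalIntegral.integral_eq_sub_of_hasDerivAt (fun t _ => hderiv t)
        (hcontf'.intervalIntegrable x y)]
    have hconst : (∫ t in x..y, f' x) = f' x * (y - x) := by
      rw [intervalIntegral.integral_const, smul_eq_mul, mul_comm]
    have hsplit : f y - f x - f' x * (y - x) = ∫ t in x..y, (f' t - f' x) := by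
      rw [intervalIntegral.integral_sub (hcontf'.intervalIntegrable x y)
        (intervalIntegrable_const), hftc, hconst]
    rw [hsplit]
    have hbd' : ∀ᵐ t ∂volume.restrict (Set.uIoc x y), ‖f' t - f' x‖ ≤ M * |t - x| := by
      filter_upwards [ae_restrict_mem measurableSet_uIoc] with t ht
      exact hf'bd t (Set.uIoc_subset_uIcc ht)
    have hint : IntervalIntegrable (fun t => M * |t - x|) volume x y :=
      (Continuous.intervalIntegrable (by continuity) x y)
    calc |∫ t in x..y, (f' t - f' x)| ≤ |(∫ t in x..y, M * |t - x|)| :=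
          intervalIntegral.norm_integral_le_abs_of_norm_le hbd' hint
      _ = M / 2 * (y - x) ^ 2 := by
          have h1 : (∫ t in x..y, M * |t - x|) = M * ∫ t in x..y, |t - x| := by
            rw [intervalIntegral.integral_const_mul]
          have h2 : (∫ t in x..y, |t - x|) = ∫ t in (x - x)..(y - x), |t| := by
            rw [← intervalIntegral.integral_comp_sub_right (fun t => |t|) x]
          rw [h1, abs_mul, abs_of_nonneg hM, h2, sub_self]
          rw [abs_int_abs]
          ring
  -- main argument
  have hcf : Continuous f := continuous_iff_continuousAt.mpr fun t => (hderiv t).continuousAt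
  set r : ℝ → ℝ := fun u => f (x - h * u) - f x + f' x * (h * u) with hr
  have hcr : Continuous r := by
    apply Continuous.add
    · exact (hcf.comp (continuous_const.sub (continuous_const.mul continuous_id))).sub
        continuous_const
    · exact continuous_const.mul (continuous_const.mul continuous_id)
  have hwin : ∀ u ∈ Set.Icc (-A) A, x - h * u ∈ Set.Icc (x - A * h) (x + A * h) := by
    intro u hu
    obtain ⟨h1, h2⟩ := hu
    constructor
    · nlinarith
    · nlinarith
  have hrbd : ∀ u, |K u * r u| ≤ (h ^ 2 / 2 * M) * (u ^ 2 * |K u|) := by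
    intro u
    by_cases hu : K u = 0
    · simp [hu]
    · have hus : u ∈ Set.Icc (-A) A := hK_supp hu
      have hk := key (x - h * u) (hwin u hus)
      have e1 : x - h * u - x = -(h * u) := by ring
      rw [e1] at hk
      have h2 : |r u| ≤ M / 2 * (h * u) ^ 2 := by
        have e : f (x - h * u) - f x - f' x * (-(h * u)) = r u := by
          simp only [hr]; ring
        rw [e] at hk
        calc |r u| ≤ M / 2 * (-(h * u)) ^ 2 := hk
          _ = M / 2 * (h * u) ^ 2 := by ring
      calc |K u * r u| = |K u| * |r u| := abs_mul _ _
        _ ≤ |K u| * (M / 2 * (h * u) ^ 2) :=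
            mul_le_mul_of_nonneg_left h2 (abs_nonneg _)
        _ = (h ^ 2 / 2 * M) * (u ^ 2 * |K u|) := by ring
  have hKm : AEStronglyMeasurable K volume := hK_int.aestronglyMeasurable
  have I2 : Integrable (fun u => u * K u) := by
    refine Integrable.mono (hK_int.abs.const_mul A)
      (aestronglyMeasurable_id.mul hKm) ?_
    filter_upwards with u
    by_cases hu : K u = 0
    · simp [hu]
    · have hus : u ∈ Set.Icc (-A) A := hK_supp hu
      have huA : |u| ≤ A := abs_le.mpr ⟨hus.1, hus.2⟩
      rw [Real.norm_eq_abs, Real.norm_eq_abs, abs_mul, abs_mul, abs_abs,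
        abs_of_pos hA]
      exact mul_le_mul_of_nonneg_right huA (abs_nonneg _)
  have I3 : Integrable (fun u => K u * r u) := by
    refine Integrable.mono (hK_mom2.const_mul (h ^ 2 / 2 * M))
      (hKm.mul hcr.aestronglyMeasurable) ?_
    filter_upwards with u
    rw [Real.norm_eq_abs, Real.norm_eq_abs]
    exact (hrbd u).trans (le_abs_self _)
  have I0 : Integrable (fun u => K u * f (x - h * u)) := by
    have e : (fun u => K u * f (x - h * u))
        = fun u => (K u * f x - (f' x * h) * (u * K u)) + K u * r u := by
      funext u; simp only [hr]; ring
    rw [e]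
    exact ((hK_int.mul_const (f x)).sub (I2.const_mul _)).add I3
  have hsplit : (∫ u, K u * f (x - h * u)) - f x = ∫ u, K u * r u := by
    have e : (fun u => K u * r u)
        = fun u => (K u * f (x - h * u) - K u * f x) + (f' x * h) * (u * K u) := by
      funext u; simp only [hr]; ring
    have Isub : Integrable (fun u => K u * f (x - h * u) - K u * f x) :=
      I0.sub (hK_int.mul_const _)
    have Imul : Integrable (fun u => (f' x * h) * (u * K u)) := I2.const_mul _
    rw [e, MeasureTheory.integral_add Isub Imul,
      MeasureTheory.integral_sub I0 (hK_int.mul_const _),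
      MeasureTheory.integral_mul_const, hK_norm,
      MeasureTheory.integral_const_mul, hK_mean]
    ring
  rw [hsplit]
  calc |∫ u, K u * r u| ≤ ∫ u, (h ^ 2 / 2 * M) * (u ^ 2 * |K u|) := by
        rw [← Real.norm_eq_abs]
        refine MeasureTheory.norm_integral_le_of_norm_le
          (hK_mom2.const_mul _) ?_
        filter_upwards with u
        rw [Real.norm_eq_abs]
        exact hrbd u
    _ = (h ^ 2 / 2) * M * ∫ u, u ^ 2 * |K u| := by
        rw [MeasureTheory.integral_const_mul]
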